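/- Let p ≥ 1 and let [ℓ_1,u_1),…,[ℓ_p,u_p) be nonempty half-open real intervals with ℓ_1 ≤ … ≤ ℓ_p, and let i ∈ {1,…,p} and j ∈ ℕ with i + j < p + 1. For s ∈ ℝ let m(s) be the least index h with i ≤ h ≤ p and ℓ_h > s (or p+1 if none), and let e(i,s) = #{h : i ≤ h < m(s), u_h ≤ s}. Then D(i,j) = min { 1 + D(m(s), j − e(i,s)) : s ∈ ℝ, e(i,s) ≤ j }, and this minimum is attained. (This is the dynamic-programming decomposition underlying the recursion for D: in an optimal set the minimum element s pierces only intervals with ℓ_h ≤ s, and any prefix interval missed by s is missed by the whole set.) -/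
import Mathlib


open Classical

private lemma mono_aux (p : ℕ) (ℓ : ℕ → ℝ)
    (hsorted : ∀ h, 1 ≤ h → h < p → ℓ h ≤ ℓ (h + 1)) :
    ∀ a b, 1 ≤ a → a ≤ b → b ≤ p → ℓ a ≤ ℓ b := by
  intro a b ha
  induction b with
  | zero => intro hab _; exact absurd hab (by omega)
  | succ n ih =>
    intro hab hbp
    rcases Nat.lt_or_ge a (n + 1) with h | h
    · exact le_trans (ih (by omega) (by omega)) (hsorted n (by omega) (by omega))
    · have : a = n + 1 := by omega
      rw [this]

private lemma attain_aux (p : ℕ) (ℓ u : ℕ → ℝ)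
    (hne : ∀ h, 1 ≤ h → h ≤ p → ℓ h < u h)
    (i' j' : ℕ) (h1 : 1 ≤ i') :
    ∃ S : Finset ℝ, S.card =
      sInf {c | ∃ S : Finset ℝ, S.card = c ∧
        ((Finset.Icc i' p).filter
          (fun h => ∀ x ∈ S, x ∉ Set.Ico (ℓ h) (u h))).card ≤ j'} ∧
      ((Finset.Icc i' p).filter
        (fun h => ∀ x ∈ S, x ∉ Set.Ico (ℓ h) (u h))).card ≤ j' := by
  have hne' : {c | ∃ S : Finset ℝ, S.card = c ∧
      ((Finset.Icc i' p).filter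
        (fun h => ∀ x ∈ S, x ∉ Set.Ico (ℓ h) (u h))).card ≤ j'}.Nonempty := by
    refine ⟨((Finset.Icc i' p).image ℓ).card, (Finset.Icc i' p).image ℓ, rfl, ?_⟩
    have hf : (Finset.Icc i' p).filter
        (fun h => ∀ x ∈ (Finset.Icc i' p).image ℓ, x ∉ Set.Ico (ℓ h) (u h)) = ∅ := by
      rw [Finset.filter_eq_empty_iff]
      intro h hh
      simp only [Finset.mem_Icc] at hh
      push_neg
      exact ⟨ℓ h, Finset.mem_image_of_mem ℓ (by simp only [Finset.mem_Icc]; omega),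
        Set.mem_Ico.mpr ⟨le_refl _, hne h (by omega) hh.2⟩⟩
    rw [hf]
    simp
  exact Nat.sInf_mem hne'

/-- Dynamic-programming decomposition underlying the recursion for `D`: for
sorted nonempty half-open intervals `[ℓ h, u h)` (`h = 1,…,p`), `D i j` being
the least cardinality of a finite set missing at most `j` of the intervals
indexed by `i,…,p`, with `m s` the least index `h ∈ {i,…,p}` with `ℓ h > s`
(or `p+1` if none) and `e s = #{h : i ≤ h < m s, u h ≤ s}`, if `i + j < p + 1`
then `D i j` is the minimum, attained, of `1 + D (m s) (j - e s)` over all real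
`s` with `e s ≤ j`. -/
theorem D_dp_decomposition
    (p : ℕ) (hp : 1 ≤ p) (ℓ u : ℕ → ℝ)
    (hne : ∀ h, 1 ≤ h → h ≤ p → ℓ h < u h)
    (hsorted : ∀ h, 1 ≤ h → h < p → ℓ h ≤ ℓ (h + 1))
    (D : ℕ → ℕ → ℕ)
    (hD : ∀ i j, 1 ≤ i → i ≤ p + 1 →
      D i j = sInf {c | ∃ S : Finset ℝ, S.card = c ∧
        ((Finset.Icc i p).filter
          (fun h => ∀ x ∈ S, x ∉ Set.Ico (ℓ h) (u h))).card ≤ j})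
    (i j : ℕ) (hi1 : 1 ≤ i) (hip : i ≤ p) (hij : i + j < p + 1)
    (m : ℝ → ℕ)
    (hm : ∀ s : ℝ,
      ((∃ h, i ≤ h ∧ h ≤ p ∧ s < ℓ h) →
        IsLeast {h | i ≤ h ∧ h ≤ p ∧ s < ℓ h} (m s)) ∧
      ((¬ ∃ h, i ≤ h ∧ h ≤ p ∧ s < ℓ h) → m s = p + 1))
    (e : ℝ → ℕ)
    (he : ∀ s : ℝ, e s = ((Finset.Ico i (m s)).filter (fun h => u h ≤ s)).card) :
    IsLeast {v | ∃ s : ℝ, e s ≤ j ∧ v = 1 + D (m s) (j - e s)} (D i j) := by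
  have mono := mono_aux p ℓ hsorted
  -- basic properties of m
  have hm' : ∀ s : ℝ, i ≤ m s ∧ m s ≤ p + 1 ∧
      (∀ h, i ≤ h → h < m s → ℓ h ≤ s) ∧ (m s ≤ p → s < ℓ (m s)) := by
    intro s
    by_cases hex : ∃ h, i ≤ h ∧ h ≤ p ∧ s < ℓ h
    · obtain ⟨⟨h1, h2, h3⟩, hlb⟩ := (hm s).1 hex
      refine ⟨h1, by omega, ?_, fun _ => h3⟩
      intro h hih hhm
      by_contra hc
      push_neg at hc
      exact absurd (hlb ⟨hih, by omega, hc⟩) (by omega)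
    · have hms := (hm s).2 hex
      refine ⟨by omega, by omega, ?_, fun hle => absurd hle (by omega)⟩
      intro h hih hhm
      by_contra hc
      push_neg at hc
      exact hex ⟨h, hih, by omega, hc⟩
  -- lower bound : D i j ≤ 1 + D (m s) (j - e s) whenever e s ≤ j
  have lb : ∀ s : ℝ, e s ≤ j → D i j ≤ 1 + D (m s) (j - e s) := by
    intro s hes
    obtain ⟨him, hmp1, hpre, hsuf⟩ := hm' s
    obtain ⟨T, hTcard, hTmiss⟩ := attain_aux p ℓ u hne (m s) (j - e s) (by omega)
    rw [← hD (m s) (j - e s) (by omega) hmp1] at hTcard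
    have hsplit : Finset.Icc i p = Finset.Ico i (m s) ∪ Finset.Icc (m s) p := by
      ext h; simp only [Finset.mem_Icc, Finset.mem_union, Finset.mem_Ico]; omega
    have hdisj : Disjoint (Finset.Ico i (m s)) (Finset.Icc (m s) p) := by
      simp only [Finset.disjoint_left, Finset.mem_Ico, Finset.mem_Icc]; omega
    have hmiss : ((Finset.Icc i p).filter
        (fun h => ∀ x ∈ insert s T, x ∉ Set.Ico (ℓ h) (u h))).card ≤ j := by
      rw [hsplit, Finset.filter_union,
        Finset.card_union_of_disjoint (Finset.disjoint_filter_filter hdisj)]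
      have h1 : ((Finset.Ico i (m s)).filter
          (fun h => ∀ x ∈ insert s T, x ∉ Set.Ico (ℓ h) (u h))).card ≤ e s := by
        rw [he s]
        apply Finset.card_le_card
        intro h hh
        simp only [Finset.mem_filter, Finset.mem_Ico] at hh ⊢
        refine ⟨hh.1, ?_⟩
        have hls : ℓ h ≤ s := hpre h hh.1.1 hh.1.2
        have hsnot := hh.2 s (Finset.mem_insert_self s T)
        by_contra hus
        push_neg at hus
        exact hsnot ⟨hls, hus⟩
      have h2 : ((Finset.Icc (m s) p).filter
          (fun h => ∀ x ∈ insert s T, x ∉ Set.Ico (ℓ h) (u h))).card ≤ j - e s := by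
        refine le_trans (Finset.card_le_card ?_) hTmiss
        intro h hh
        simp only [Finset.mem_filter] at hh ⊢
        exact ⟨hh.1, fun x hx => hh.2 x (Finset.mem_insert_of_mem hx)⟩
      omega
    have hcard : (insert s T).card ≤ 1 + D (m s) (j - e s) := by
      have := Finset.card_insert_le s T
      omega
    rw [hD i j hi1 (by omega)]
    exact le_trans (Nat.sInf_le ⟨insert s T, rfl, hmiss⟩) hcard
  -- an optimal set for (i, j)
  obtain ⟨S, hScard, hSmiss⟩ := attain_aux p ℓ u hne i j hi1
  rw [← hD i j hi1 (by omega)] at hScard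
  have hSne : S.Nonempty := by
    by_contra hc
    rw [Finset.not_nonempty_iff_eq_empty] at hc
    subst hc
    have hall : (Finset.Icc i p).filter
        (fun h => ∀ x ∈ (∅ : Finset ℝ), x ∉ Set.Ico (ℓ h) (u h)) = Finset.Icc i p := by
      apply Finset.filter_true_of_mem
      intro h _ x hx
      simp at hx
    rw [hall, Nat.card_Icc] at hSmiss
    omega
  set s := S.min' hSne with hsdef
  obtain ⟨him, hmp1, hpre, hsuf⟩ := hm' s
  have hsmem : s ∈ S := S.min'_mem hSne
  have hsmin : ∀ x ∈ S, s ≤ x := fun x hx => S.min'_le x hx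
  have hes : e s ≤ j := by
    rw [he s]
    refine le_trans (Finset.card_le_card ?_) hSmiss
    intro h hh
    simp only [Finset.mem_filter, Finset.mem_Ico, Finset.mem_Icc] at hh ⊢
    refine ⟨⟨hh.1.1, by omega⟩, ?_⟩
    intro x hx hxI
    exact absurd (le_trans hh.2 (hsmin x hx)) (not_le.mpr hxI.2)
  have hsplit : Finset.Icc i p = Finset.Ico i (m s) ∪ Finset.Icc (m s) p := by
    ext h; simp only [Finset.mem_Icc, Finset.mem_union, Finset.mem_Ico]; omega
  have hdisj : Disjoint (Finset.Ico i (m s)) (Finset.Icc (m s) p) := by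
    simp only [Finset.disjoint_left, Finset.mem_Ico, Finset.mem_Icc]; omega
  -- e s + (misses of S beyond m s) ≤ j
  have hkey : e s + ((Finset.Icc (m s) p).filter
      (fun h => ∀ x ∈ S, x ∉ Set.Ico (ℓ h) (u h))).card ≤ j := by
    have hsub : (Finset.Ico i (m s)).filter (fun h => u h ≤ s) ⊆
        (Finset.Ico i (m s)).filter (fun h => ∀ x ∈ S, x ∉ Set.Ico (ℓ h) (u h)) := by
      intro h hh
      simp only [Finset.mem_filter, Finset.mem_Ico] at hh ⊢
      exact ⟨hh.1, fun x hx hxI =>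
        absurd (le_trans hh.2 (hsmin x hx)) (not_le.mpr hxI.2)⟩
    have h1 := Finset.card_le_card hsub
    have hEq : ((Finset.Icc i p).filter
        (fun h => ∀ x ∈ S, x ∉ Set.Ico (ℓ h) (u h))).card =
        ((Finset.Ico i (m s)).filter
          (fun h => ∀ x ∈ S, x ∉ Set.Ico (ℓ h) (u h))).card +
        ((Finset.Icc (m s) p).filter
          (fun h => ∀ x ∈ S, x ∉ Set.Ico (ℓ h) (u h))).card := by
      rw [hsplit, Finset.filter_union,
        Finset.card_union_of_disjoint (Finset.disjoint_filter_filter hdisj)]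
    rw [he s]
    omega
  -- removing s keeps suffix misses unchanged
  have hTmiss : ((Finset.Icc (m s) p).filter
      (fun h => ∀ x ∈ S.erase s, x ∉ Set.Ico (ℓ h) (u h))).card ≤ j - e s := by
    have hEq2 : (Finset.Icc (m s) p).filter
        (fun h => ∀ x ∈ S.erase s, x ∉ Set.Ico (ℓ h) (u h)) =
        (Finset.Icc (m s) p).filter
        (fun h => ∀ x ∈ S, x ∉ Set.Ico (ℓ h) (u h)) := by
      apply Finset.filter_congr
      intro h hh
      simp only [Finset.mem_Icc] at hh
      constructor
      · intro hT x hx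
        rcases eq_or_ne x s with rfl | hxs
        · intro hI
          have hmp : m s ≤ p := le_trans hh.1 hh.2
          have h2 : s < ℓ h :=
            lt_of_lt_of_le (hsuf hmp) (mono (m s) h (by omega) hh.1 hh.2)
          exact absurd hI.1 (not_le.mpr h2)
        · exact hT x (Finset.mem_erase.mpr ⟨hxs, hx⟩)
      · intro hSall x hx
        exact hSall x (Finset.mem_erase.mp hx).2
    rw [hEq2]
    omega
  have hDm : D (m s) (j - e s) ≤ (S.erase s).card := by
    rw [hD (m s) (j - e s) (by omega) hmp1]
    exact Nat.sInf_le ⟨S.erase s, rfl, hTmiss⟩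
  have hcard_erase : (S.erase s).card = S.card - 1 := Finset.card_erase_of_mem hsmem
  have hS1 : 1 ≤ S.card := Finset.card_pos.mpr hSne
  have hge : 1 + D (m s) (j - e s) ≤ D i j := by omega
  constructor
  · exact ⟨s, hes, le_antisymm (lb s hes) hge⟩
  · rintro v ⟨s', hs', rfl⟩
    exact lb s' hs'
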